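/- Suppose (x, X, y, Y₁₂, α) lacks only (P4a), α₁ = 0, X₁₁ > 0, and α₂ < α₂⁻. Then the point (x, X, y, Y₁₂, (0, α₂⁻)) satisfies all of the conditions (L), (P3), (P4a), (P4b), and (P5). -/

import Mathlib

open Matrix

set_option linter.unusedVariables false

/-- Linear conditions (L). -/
def Lcond (x1 x2 X11 X12 X22 y1 y2 Y12 a1 a2 : ℝ) : Prop :=
  X11 ≤ x1 ∧ x1 ≤ y1 ∧ X22 ≤ x2 ∧ x2 ≤ y2 ∧
  max 0 (x1 - a1 + x2 - a2 - Y12) ≤ X12 ∧ X12 ≤ min (x1 - a1) (x2 - a2) ∧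
  0 ≤ a1 ∧ a1 ≤ y1 - Y12 ∧ 0 ≤ a2 ∧ a2 ≤ y2 - Y12 ∧
  max 0 (y1 + y2 - 1) ≤ Y12 ∧ Y12 ≤ min y1 y2

/-- PSD condition (P3). -/
def P3cond (x1 x2 X11 X12 X22 y1 y2 Y12 a1 a2 : ℝ) : Prop :=
  (!![Y12, x1 - a1, x2 - a2;
      x1 - a1, x1 - a1, X12;
      x2 - a2, X12, x2 - a2] : Matrix (Fin 3) (Fin 3) ℝ).PosSemidef

/-- PSD condition (P4a). -/
def P4acond (x1 x2 X11 X12 X22 y1 y2 Y12 a1 a2 : ℝ) : Prop :=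
  (!![y1 - Y12, 0, a1, 0;
      0, Y12, x1 - a1, x2 - a2;
      a1, x1 - a1, X11, X12;
      0, x2 - a2, X12, x2 - a2] : Matrix (Fin 4) (Fin 4) ℝ).PosSemidef

/-- PSD condition (P4b). -/
def P4bcond (x1 x2 X11 X12 X22 y1 y2 Y12 a1 a2 : ℝ) : Prop :=
  (!![y2 - Y12, 0, 0, a2;
      0, Y12, x1 - a1, x2 - a2;
      0, x1 - a1, x1 - a1, X12;
      a2, x2 - a2, X12, X22] : Matrix (Fin 4) (Fin 4) ℝ).PosSemidef

/-- PSD condition (P5). -/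
def P5cond (x1 x2 X11 X12 X22 y1 y2 Y12 a1 a2 : ℝ) : Prop :=
  (!![y1 - Y12, 0, 0, a1, 0;
      0, y2 - Y12, 0, 0, a2;
      0, 0, Y12, x1 - a1, x2 - a2;
      a1, 0, x1 - a1, X11, X12;
      0, a2, x2 - a2, X12, X22] : Matrix (Fin 5) (Fin 5) ℝ).PosSemidef

/-- (x, X, y, Y₁₂, α) lacks only (P4a): it satisfies (L), (P3), (P4b), (P5)
but violates (P4a). -/
def LacksOnlyP4a (x1 x2 X11 X12 X22 y1 y2 Y12 a1 a2 : ℝ) : Prop :=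
  Lcond x1 x2 X11 X12 X22 y1 y2 Y12 a1 a2 ∧
  P3cond x1 x2 X11 X12 X22 y1 y2 Y12 a1 a2 ∧
  P4bcond x1 x2 X11 X12 X22 y1 y2 Y12 a1 a2 ∧
  P5cond x1 x2 X11 X12 X22 y1 y2 Y12 a1 a2 ∧
  ¬ P4acond x1 x2 X11 X12 X22 y1 y2 Y12 a1 a2

/-- α₂⁻ = x₂ − X₁₂x₁/X₁₁ − (θ + √Δ)/(2X₁₁), where θ = Y₁₂X₁₁ − x₁² and
Δ = θ(θ + 4X₁₂(x₁ − X₁₂)). -/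
noncomputable def alpha2minus (x1 x2 X11 X12 Y12 : ℝ) : ℝ :=
  x2 - X12 * x1 / X11 -
    ((Y12 * X11 - x1 ^ 2) +
      Real.sqrt ((Y12 * X11 - x1 ^ 2) *
        ((Y12 * X11 - x1 ^ 2) + 4 * X12 * (x1 - X12)))) / (2 * X11)

/-- α₂⁺ = x₂ − X₁₂x₁/X₁₁ − (θ − √Δ)/(2X₁₁), where θ = Y₁₂X₁₁ − x₁² and
Δ = θ(θ + 4X₁₂(x₁ − X₁₂)). -/
noncomputable def alpha2plus (x1 x2 X11 X12 Y12 : ℝ) : ℝ :=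
  x2 - X12 * x1 / X11 -
    ((Y12 * X11 - x1 ^ 2) -
      Real.sqrt ((Y12 * X11 - x1 ^ 2) *
        ((Y12 * X11 - x1 ^ 2) + 4 * X12 * (x1 - X12)))) / (2 * X11)

private lemma cancel_nonneg' {c q : ℝ} (hc : 0 < c) (h : 0 ≤ c * q) : 0 ≤ q := by
  by_contra h'
  push_neg at h'
  nlinarith

private lemma cancel_pos' {c q : ℝ} (hc : 0 < c) (h : 0 < c * q) : 0 < q := by
  by_contra h'
  push_neg at h'
  nlinarith

private lemma qM_nonneg' (x1 X11 X12 Y12 T p : ℝ) (hX : 0 < X11)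
    (hth : 0 < Y12*X11 - x1^2)
    (hp : p^2 = (Y12*X11 - x1^2)*(p + X12*(x1 - X12)))
    (hT : X11*T = p + x1*X12) :
    ∀ v1 v2 v3 : ℝ,
      0 ≤ Y12*v1^2 + X11*v2^2 + T*v3^2 + 2*x1*v1*v2 + 2*T*v1*v3 + 2*X12*v2*v3 := by
  intro v1 v2 v3
  apply cancel_nonneg' hX
  apply cancel_nonneg' hth
  have e : (Y12*X11 - x1^2) * (X11 * (Y12*v1^2 + X11*v2^2 + T*v3^2 + 2*x1*v1*v2 + 2*T*v1*v3 + 2*X12*v2*v3))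
      = (Y12*X11 - x1^2)*(x1*v1 + X11*v2 + X12*v3)^2 + ((Y12*X11 - x1^2)*v1 + p*v3)^2 := by
    linear_combination ((Y12*X11 - x1^2)*(v3^2 + 2*v1*v3))*hT - (v3^2)*hp
  rw [e]
  positivity

private lemma qG_nonneg' (x1 X11 X12 Y12 T p b astar X22 : ℝ) (hX : 0 < X11)
    (hth : 0 < Y12*X11 - x1^2)
    (hp : p^2 = (Y12*X11 - x1^2)*(p + X12*(x1 - X12)))
    (hT : X11*T = p + x1*X12)
    (hb : 0 < b) (hpsi : astar^2 ≤ b*(X22 - T)) :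
    ∀ w u1 u2 u3 : ℝ,
      0 ≤ b*w^2 + Y12*u1^2 + X11*u2^2 + X22*u3^2 + 2*astar*w*u3 + 2*x1*u1*u2
          + 2*T*u1*u3 + 2*X12*u2*u3 := by
  intro w u1 u2 u3
  have h1 := qM_nonneg' x1 X11 X12 Y12 T p hX hth hp hT u1 u2 u3
  have h2 : 0 ≤ b*w^2 + 2*astar*w*u3 + (X22 - T)*u3^2 := by
    apply cancel_nonneg' hb
    nlinarith [sq_nonneg (b*w + astar*u3), mul_nonneg (sub_nonneg.2 hpsi) (sq_nonneg u3)]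
  have e : b*w^2 + Y12*u1^2 + X11*u2^2 + X22*u3^2 + 2*astar*w*u3 + 2*x1*u1*u2
          + 2*T*u1*u3 + 2*X12*u2*u3
      = (Y12*u1^2 + X11*u2^2 + T*u3^2 + 2*x1*u1*u2 + 2*T*u1*u3 + 2*X12*u2*u3)
        + (b*w^2 + 2*astar*w*u3 + (X22 - T)*u3^2) := by ring
  rw [e]
  exact add_nonneg h1 h2

set_option maxHeartbeats 4000000 in
/-- If (x, X, y, Y₁₂, α) lacks only (P4a), α₁ = 0, X₁₁ > 0 and α₂ < α₂⁻, then
(x, X, y, Y₁₂, (0, α₂⁻)) satisfies (L), (P3), (P4a), (P4b) and (P5). -/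
theorem stmt12 (x1 x2 X11 X12 X22 y1 y2 Y12 a2 : ℝ)
    (h : LacksOnlyP4a x1 x2 X11 X12 X22 y1 y2 Y12 0 a2)
    (hX : 0 < X11) (hlt : a2 < alpha2minus x1 x2 X11 X12 Y12) :
    Lcond x1 x2 X11 X12 X22 y1 y2 Y12 0 (alpha2minus x1 x2 X11 X12 Y12) ∧
    P3cond x1 x2 X11 X12 X22 y1 y2 Y12 0 (alpha2minus x1 x2 X11 X12 Y12) ∧
    P4acond x1 x2 X11 X12 X22 y1 y2 Y12 0 (alpha2minus x1 x2 X11 X12 Y12) ∧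
    P4bcond x1 x2 X11 X12 X22 y1 y2 Y12 0 (alpha2minus x1 x2 X11 X12 Y12) ∧
    P5cond x1 x2 X11 X12 X22 y1 y2 Y12 0 (alpha2minus x1 x2 X11 X12 Y12) := by

  obtain ⟨hL, hP3, hP4b, hP5, hnP4a⟩ := h
  obtain ⟨hL1, hL2, hL3, hL4, hL5, hL6, hL7, hL8, hL9, hL10, hL11, hL12⟩ := hL
  have hX12nn : (0:ℝ) ≤ X12 := le_trans (le_max_left _ _) hL5
  have hlin1 : x1 + (x2 - a2) - Y12 ≤ X12 := by
    have := le_trans (le_max_right _ _) hL5; linarith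
  have hX12x1 : X12 ≤ x1 := by have := le_trans hL6 (min_le_left _ _); linarith
  have hX12t2 : X12 ≤ x2 - a2 := le_trans hL6 (min_le_right _ _)
  have hY1 : Y12 ≤ y1 := le_trans hL12 (min_le_left _ _)
  have hY2 : Y12 ≤ y2 := le_trans hL12 (min_le_right _ _)
  have hY12nn : (0:ℝ) ≤ Y12 := le_trans (le_max_left _ _) hL11
  have hx1pos : 0 < x1 := lt_of_lt_of_le hX hL1
  have hX' : X11 ≠ 0 := ne_of_gt hX
  have hAM : alpha2minus x1 x2 X11 X12 Y12
      = x2 - (Y12 * X11 - x1 ^ 2 + 2 * x1 * X12 +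
          Real.sqrt ((Y12 * X11 - x1 ^ 2) * (Y12 * X11 - x1 ^ 2 + 4 * X12 * (x1 - X12)))) / (2 * X11) := by
    unfold alpha2minus
    field_simp
    ring
  rw [hAM] at hlt ⊢
  set s := Real.sqrt ((Y12 * X11 - x1 ^ 2) * (Y12 * X11 - x1 ^ 2 + 4 * X12 * (x1 - X12))) with hs_def
  set tst := (Y12 * X11 - x1 ^ 2 + 2 * x1 * X12 + s) / (2 * X11) with htst_def
  have htst2 : 2 * X11 * tst = Y12 * X11 - x1 ^ 2 + 2 * x1 * X12 + s := by
    rw [htst_def]; field_simp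
  -- θ ≥ 0
  have hq1 := (posSemidef_iff_dotProduct_mulVec.mp hP5).2 ![0, 0, X11, -x1, 0]
  simp [dotProduct, Matrix.mulVec, Fin.sum_univ_five, Matrix.vecHead, Matrix.vecTail] at hq1
  have hth0 : 0 ≤ Y12 * X11 - x1 ^ 2 := by nlinarith [hq1, hX]
  clear hq1
  have hs0 : 0 ≤ s := Real.sqrt_nonneg _
  have hDnn : 0 ≤ (Y12 * X11 - x1 ^ 2) * (Y12 * X11 - x1 ^ 2 + 4 * X12 * (x1 - X12)) := by
    apply mul_nonneg hth0
    nlinarith [hth0, hX12nn, hX12x1]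
  have hs2 : s ^ 2 = (Y12 * X11 - x1 ^ 2) * (Y12 * X11 - x1 ^ 2 + 4 * X12 * (x1 - X12)) := by
    rw [hs_def]; exact Real.sq_sqrt hDnn
  have hsth : Y12 * X11 - x1 ^ 2 ≤ s := by
    nlinarith [hs2, hs0, hth0, mul_nonneg (mul_nonneg hth0 hX12nn) (sub_nonneg.2 hX12x1)]
  have htt : tst < x2 - a2 := by linarith
  -- θ > 0
  have hthpos : 0 < Y12 * X11 - x1 ^ 2 := by
    rcases lt_or_eq_of_le hth0 with h0 | h0
    · exact h0
    · exfalso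
      have hth00 : Y12 * X11 - x1 ^ 2 = 0 := h0.symm
      have hs00 : s = 0 := by
        rw [hs_def]
        have e0 : (Y12 * X11 - x1 ^ 2) * (Y12 * X11 - x1 ^ 2 + 4 * X12 * (x1 - X12)) = 0 := by
          rw [hth00]; ring
        rw [e0, Real.sqrt_zero]
      have hk2 : x1 * X12 < X11 * (x2 - a2) := by
        have hmm := mul_lt_mul_of_pos_left htt hX
        nlinarith [htst2, hs00, hth00]
      have hq4 := (posSemidef_iff_dotProduct_mulVec.mp hP5).2 ![0, 0, -(X22+1)*x1, (X22+1)*Y12, 2*(x1*(x2-a2) - Y12*X12)]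
      simp [dotProduct, Matrix.mulVec, Fin.sum_univ_five, Matrix.vecHead, Matrix.vecTail] at hq4
      have e1 : (X22+1)^2*Y12*(Y12*X11 - x1^2) = 0 := by rw [hth00]; ring
      have hgsq : (x1*(x2-a2) - Y12*X12)^2 ≤ 0 := by nlinarith [hq4, e1]
      have hg : x1*(x2-a2) - Y12*X12 = 0 := by
        have h2 : (x1*(x2-a2) - Y12*X12)^2 = 0 := le_antisymm hgsq (sq_nonneg _)
        exact pow_eq_zero_iff two_ne_zero |>.mp h2
      nlinarith [hk2, hg, hth00, hx1pos]
  -- l2 > s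
  have hl2s : s < 2*X11*(x2 - a2) - (Y12*X11 - x1^2 + 2*x1*X12) := by
    have hmm := mul_lt_mul_of_pos_left htt hX
    nlinarith [htst2]
  have hl2pos : 0 < 2*X11*(x2 - a2) - (Y12*X11 - x1^2 + 2*x1*X12) := lt_of_le_of_lt hs0 hl2s
  -- detR ≥ 0
  have hq2 := (posSemidef_iff_dotProduct_mulVec.mp hP5).2 ![0, 0, x1*X12 - X11*(x2-a2), x1*(x2-a2) - Y12*X12, Y12*X11 - x1^2]
  simp [dotProduct, Matrix.mulVec, Fin.sum_univ_five, Matrix.vecHead, Matrix.vecTail] at hq2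
  have hdetR : 0 ≤ (Y12*X11 - x1^2)*X22 - (X11*(x2-a2)^2 - 2*x1*X12*(x2-a2) + Y12*X12^2) := by
    apply cancel_nonneg' hthpos
    linarith [hq2]
  clear hq2
  -- f2 < 0
  have hid : 4*X11*(X11*(x2-a2)^2 - (Y12*X11 - x1^2 + 2*x1*X12)*(x2-a2) + Y12*X12^2)
      = (2*X11*(x2-a2) - (Y12*X11 - x1^2 + 2*x1*X12))^2 - s^2 := by
    linear_combination hs2
  have hf2neg : 0 < X11*(x2-a2)^2 - (Y12*X11 - x1^2 + 2*x1*X12)*(x2-a2) + Y12*X12^2 := by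
    nlinarith [hid, hl2s, hs0, hX]
  -- E2 and positivity chain
  have hE2 : 0 ≤ (Y12*X11 - x1^2)*a2
      - (X11*(x2-a2)^2 - (Y12*X11 - x1^2 + 2*x1*X12)*(x2-a2) + Y12*X12^2) := by
    linarith [hdetR, mul_nonneg hthpos.le (sub_nonneg.2 hL3)]
  have ha2pos : 0 < a2 := by
    apply cancel_pos' hthpos
    linarith [hE2, hf2neg]
  have hbpos : 0 < y2 - Y12 := lt_of_lt_of_le ha2pos hL10
  -- detG ≥ 0
  have hq3 := (posSemidef_iff_dotProduct_mulVec.mp hP5).2 ![0, -(a2*(Y12*X11 - x1^2)), (y2-Y12)*(x1*X12 - X11*(x2-a2)),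
      (y2-Y12)*(x1*(x2-a2) - Y12*X12), (y2-Y12)*(Y12*X11 - x1^2)]
  simp [dotProduct, Matrix.mulVec, Fin.sum_univ_five, Matrix.vecHead, Matrix.vecTail] at hq3
  have hdetG : 0 ≤ (y2-Y12)*((Y12*X11 - x1^2)*X22 - (X11*(x2-a2)^2 - 2*x1*X12*(x2-a2) + Y12*X12^2))
      - (Y12*X11 - x1^2)*a2^2 := by
    apply cancel_nonneg' (mul_pos hbpos hthpos)
    linarith [hq3]
  clear hq3
  have hE' : 0 ≤ (Y12*X11 - x1^2)*a2*(y2 - Y12 - a2)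
      - (y2-Y12)*(X11*(x2-a2)^2 - (Y12*X11 - x1^2 + 2*x1*X12)*(x2-a2) + Y12*X12^2) := by
    linarith [hdetG, mul_nonneg (mul_nonneg hbpos.le hthpos.le) (sub_nonneg.2 hL3)]
  have hwpos : 0 < y2 - Y12 - a2 := by
    apply cancel_pos' (mul_pos hthpos ha2pos)
    linarith [hE', mul_pos hbpos hf2neg]
  -- c ≤ tst
  have hmse : 2*X11*(x2 - (y2 - Y12)) - (Y12*X11 - x1^2 + 2*x1*X12) ≤ s := by
    by_contra hcon
    push_neg at hcon
    have hm0 : 0 ≤ 2*X11*(x2 - (y2 - Y12)) - (Y12*X11 - x1^2 + 2*x1*X12) :=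
      le_trans hs0 hcon.le
    have hsm : s^2 < (2*X11*(x2 - (y2 - Y12)) - (Y12*X11 - x1^2 + 2*x1*X12))^2 := by
      nlinarith [hcon, hs0]
    have hid2 : (y2-Y12)*((2*X11*(x2-a2) - (Y12*X11 - x1^2 + 2*x1*X12))^2 - s^2)
        = 4*X11*((y2-Y12)*(X11*(x2-a2)^2 - (Y12*X11 - x1^2 + 2*x1*X12)*(x2-a2) + Y12*X12^2)) := by
      linear_combination (Y12-y2)*hid
    have hstep1 : (y2-Y12)*((2*X11*(x2-a2) - (Y12*X11 - x1^2 + 2*x1*X12))^2 - s^2)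
        ≤ 4*X11*((Y12*X11 - x1^2)*a2*(y2 - Y12 - a2)) := by
      linarith [hid2, mul_nonneg hX.le hE']
    have h1 : (y2-Y12)*((2*X11*(x2-a2) - (Y12*X11 - x1^2 + 2*x1*X12))^2
            - (2*X11*(x2 - (y2 - Y12)) - (Y12*X11 - x1^2 + 2*x1*X12))^2)
        < 4*X11*((Y12*X11 - x1^2)*a2*(y2 - Y12 - a2)) := by
      linarith [hstep1, mul_pos hbpos (sub_pos.2 hsm)]
    have h2 : (y2-Y12)*((2*X11*(x2-a2) - (Y12*X11 - x1^2 + 2*x1*X12))^2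
            - (2*X11*(x2 - (y2 - Y12)) - (Y12*X11 - x1^2 + 2*x1*X12))^2)
        = 2*X11*(y2 - Y12 - a2)*((y2-Y12)*((2*X11*(x2-a2) - (Y12*X11 - x1^2 + 2*x1*X12))
            + (2*X11*(x2 - (y2 - Y12)) - (Y12*X11 - x1^2 + 2*x1*X12)))) := by
      ring
    have h3 : 0 < 2*(Y12*X11 - x1^2)*a2 - (y2-Y12)*((2*X11*(x2-a2) - (Y12*X11 - x1^2 + 2*x1*X12))
            + (2*X11*(x2 - (y2 - Y12)) - (Y12*X11 - x1^2 + 2*x1*X12))) := by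
      apply cancel_pos' (show (0:ℝ) < 2*X11*(y2 - Y12 - a2) by positivity)
      linarith [h1, h2]
    have hml2 : 2*X11*(x2 - (y2 - Y12)) - (Y12*X11 - x1^2 + 2*x1*X12)
        ≤ 2*X11*(x2-a2) - (Y12*X11 - x1^2 + 2*x1*X12) := by
      linarith [mul_pos hX hwpos]
    have h4 : 0 < (Y12*X11 - x1^2) - (2*X11*(x2 - (y2 - Y12)) - (Y12*X11 - x1^2 + 2*x1*X12)) := by
      apply cancel_pos' hbpos
      linarith [h3, mul_nonneg hthpos.le (sub_nonneg.2 hL10),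
        mul_nonneg hbpos.le (sub_nonneg.2 hml2)]
    linarith [hsth, hcon, h4]
  have hcts : x2 - (y2 - Y12) ≤ tst := by
    have h5 : 2*X11*(x2 - (y2 - Y12)) ≤ 2*X11*tst := by linarith [htst2, hmse]
    exact (mul_le_mul_iff_right₀ (show (0:ℝ) < 2*X11 by positivity)).mp h5
  have hasb : x2 - tst ≤ y2 - Y12 := by linarith
  have hX12tst : X12 ≤ tst := by
    have h6 : 2*X11*X12 ≤ 2*X11*tst := by
      linarith [htst2, hthpos, hs0, mul_nonneg (sub_nonneg.2 hL1) hX12nn]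
    exact (mul_le_mul_iff_right₀ (show (0:ℝ) < 2*X11 by positivity)).mp h6
  have htstnn : 0 ≤ tst := le_trans hX12nn hX12tst
  -- vertex bound and Q(tst) ≥ 0
  have hv1 : (Y12*X11 - x1^2) + x1*X12 ≤ X11*tst := by linarith [htst2, hsth]
  have hA0 : 0 < (y2-Y12)*X11 + (Y12*X11 - x1^2) := by positivity
  have hvert : (y2-Y12)*x1*X12 + (Y12*X11 - x1^2)*x2
      ≤ ((y2-Y12)*X11 + (Y12*X11 - x1^2))*tst := by
    have hv2 : 0 ≤ (y2-Y12)*(X11*tst - ((Y12*X11 - x1^2) + x1*X12)) :=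
      mul_nonneg hbpos.le (by linarith)
    have hv3 : 0 ≤ (Y12*X11 - x1^2)*((y2-Y12) - (x2 - tst)) :=
      mul_nonneg hthpos.le (by linarith)
    linarith [hv2, hv3]
  have h7 : 0 ≤ ((x2-a2) - tst) * (((y2-Y12)*X11 + (Y12*X11 - x1^2))*((x2-a2)+tst)
      - 2*((y2-Y12)*x1*X12 + (Y12*X11 - x1^2)*x2)) := by
    apply mul_nonneg (by linarith)
    have h8 : ((y2-Y12)*X11 + (Y12*X11 - x1^2))*tst
        ≤ ((y2-Y12)*X11 + (Y12*X11 - x1^2))*(x2-a2) := by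
      apply mul_le_mul_of_nonneg_left (le_of_lt htt) hA0.le
    linarith [hvert, h8]
  have hQtst : 0 ≤ (y2-Y12)*((Y12*X11 - x1^2)*X22 - (X11*tst^2 - 2*x1*X12*tst + Y12*X12^2))
      - (Y12*X11 - x1^2)*(x2-tst)^2 := by linarith [hdetG, h7]
  -- f(tst) = 0
  have h9 : 2*X11*tst - (Y12*X11 - x1^2 + 2*x1*X12) = s := by linarith [htst2]
  have h10 : 4*X11*(X11*tst^2 - (Y12*X11 - x1^2 + 2*x1*X12)*tst + Y12*X12^2)
      = (2*X11*tst - (Y12*X11 - x1^2 + 2*x1*X12))^2 - s^2 := by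
    linear_combination hs2
  have hftst0 : X11*tst^2 - (Y12*X11 - x1^2 + 2*x1*X12)*tst + Y12*X12^2 = 0 := by
    have h11 : 4*X11*(X11*tst^2 - (Y12*X11 - x1^2 + 2*x1*X12)*tst + Y12*X12^2) = 4*X11*0 := by
      rw [h10, h9]; ring
    exact mul_left_cancel₀ (by positivity) h11
  -- psi
  have hpsi : (x2 - tst)^2 ≤ (y2-Y12)*(X22 - tst) := by
    have h12 : (Y12*X11 - x1^2)*((y2-Y12)*(X22 - tst) - (x2-tst)^2)
        = (y2-Y12)*((Y12*X11 - x1^2)*X22 - (X11*tst^2 - 2*x1*X12*tst + Y12*X12^2))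
          - (Y12*X11 - x1^2)*(x2-tst)^2 := by
      linear_combination (y2 - Y12)*hftst0
    have h13 : 0 ≤ (y2-Y12)*(X22 - tst) - (x2-tst)^2 := by
      apply cancel_nonneg' hthpos
      rw [h12]; exact hQtst
    linarith
  have hX22tst : tst ≤ X22 := by
    have h14 : 0 ≤ (y2-Y12)*(X22 - tst) := le_trans (sq_nonneg _) hpsi
    have h15 : 0 ≤ X22 - tst := cancel_nonneg' hbpos h14
    linarith
  -- quadratic form lemmas
  have hp : ((Y12*X11 - x1^2 + s)/2)^2
      = (Y12*X11 - x1^2)*(((Y12*X11 - x1^2 + s)/2) + X12*(x1 - X12)) := by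
    linear_combination (1/4)*hs2
  have hT : X11*tst = ((Y12*X11 - x1^2 + s)/2) + x1*X12 := by linarith [htst2]
  have hM := qM_nonneg' x1 X11 X12 Y12 tst ((Y12*X11 - x1^2 + s)/2) hX hthpos hp hT
  have hG := qG_nonneg' x1 X11 X12 Y12 tst ((Y12*X11 - x1^2 + s)/2) (y2-Y12) (x2-tst) X22
      hX hthpos hp hT hbpos hpsi
  clear hdetR hdetG hE2 hE' hid hf2neg hl2s hl2pos hmse hQtst h7 hvert hv1 hA0 hp hT h9 h10 hftst0 hpsi
  have hy1Y : (0:ℝ) ≤ y1 - Y12 := by linarith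
  have hastnn : (0:ℝ) ≤ x2 - tst := by linarith [hlt, hL9]
  refine ⟨⟨hL1, hL2, hL3, hL4, ?_, ?_, le_refl 0, ?_, ?_, ?_, hL11, hL12⟩, ?_, ?_, ?_, ?_⟩
  · exact max_le hX12nn (by linarith [hlin1, htt.le])
  · exact le_min (by linarith) (by linarith)
  · linarith
  · exact hastnn
  · exact hasb
  -- P3
  · refine posSemidef_iff_dotProduct_mulVec.mpr ⟨?_, ?_⟩
    · ext i j
      fin_cases i <;> fin_cases j <;> rfl
    · intro v
      have hv : star v = v := star_trivial v
      rw [hv]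
      simp [dotProduct, Matrix.mulVec, Fin.sum_univ_three, Matrix.vecHead, Matrix.vecTail]
      nlinarith [hM (v 0) (v 1) (v 2), mul_nonneg (sub_nonneg.2 hL1) (sq_nonneg (v 1))]
  -- P4a
  · refine posSemidef_iff_dotProduct_mulVec.mpr ⟨?_, ?_⟩
    · ext i j
      fin_cases i <;> fin_cases j <;> rfl
    · intro v
      have hv : star v = v := star_trivial v
      rw [hv]
      simp [dotProduct, Matrix.mulVec, Fin.sum_univ_four, Matrix.vecHead, Matrix.vecTail]
      nlinarith [hM (v 1) (v 2) (v 3), mul_nonneg hy1Y (sq_nonneg (v 0))]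
  -- P4b
  · refine posSemidef_iff_dotProduct_mulVec.mpr ⟨?_, ?_⟩
    · ext i j
      fin_cases i <;> fin_cases j <;> rfl
    · intro v
      have hv : star v = v := star_trivial v
      rw [hv]
      simp [dotProduct, Matrix.mulVec, Fin.sum_univ_four, Matrix.vecHead, Matrix.vecTail]
      nlinarith [hG (v 0) (v 1) (v 2) (v 3), mul_nonneg (sub_nonneg.2 hL1) (sq_nonneg (v 2))]
  -- P5
  · refine posSemidef_iff_dotProduct_mulVec.mpr ⟨?_, ?_⟩
    · ext i j
      fin_cases i <;> fin_cases j <;> rfl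
    · intro v
      have hv : star v = v := star_trivial v
      rw [hv]
      simp [dotProduct, Matrix.mulVec, Fin.sum_univ_five, Matrix.vecHead, Matrix.vecTail]
      nlinarith [hG (v 1) (v 2) (v 3) (v 4), mul_nonneg hy1Y (sq_nonneg (v 0))]
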